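/- arXiv:2503.22536 — 3 statements merged into one kernel-verified Lean document; each statement's English description precedes it below -/
import Mathlib

section
/- For every real number k ≥ 2, the areal Mahler measure and the Mahler measure of x + y + k both equal log k: m_D(x+y+k) = m(x+y+k) = log k. -/
open MeasureTheory Real

/-- The closed unit disk in the complex plane. -/
def unitDisk : Set ℂ := {z : ℂ | ‖z‖ ≤ 1}

/-- The areal (logarithmic) Mahler measure of `x + y + k`. -/
noncomputable def arealMahlerXYK (k : ℝ) : ℝ :=
  (1 / π ^ 2) *
    ∫ x in unitDisk, ∫ y in unitDisk, Real.log ‖x + y + (k : ℂ)‖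

/-- The (logarithmic) Mahler measure of `x + y + k`. -/
noncomputable def mahlerXYK (k : ℝ) : ℝ :=
  (1 / (2 * π) ^ 2) *
    ∫ θ₁ in (0 : ℝ)..(2 * π), ∫ θ₂ in (0 : ℝ)..(2 * π),
      Real.log ‖Complex.exp (θ₁ * Complex.I) +
        Complex.exp (θ₂ * Complex.I) + (k : ℂ)‖

section Aux

set_option maxHeartbeats 1000000

open Complex Metric intervalIntegral Set

lemma circle_log (c : ℂ) (R : ℝ) (hR : 0 < R) (hc : R < ‖c‖) :
    ∫ θ in (0:ℝ)..(2*π), Real.log (‖R * Complex.exp (θ * Complex.I) + c‖)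
      = 2 * π * Real.log (‖c‖) := by
  have hc0 : c ≠ 0 := by
    intro h; rw [h] at hc; simp at hc; linarith
  have hne : ∀ z : ℂ, ‖z‖ ≤ R → z + c ≠ 0 := by
    intro z hz h
    have hz2 : z = -c := by linear_combination h
    rw [hz2] at hz; simp at hz; linarith
  set f : ℂ → ℂ := fun z => Complex.log (1 + z / c) with hf
  have hdiff : ∀ z ∈ closedBall (0:ℂ) R, DifferentiableAt ℂ f z := by
    intro z hz
    have hz' : ‖z‖ ≤ R := by simpa [Complex.dist_eq] using hz
    have hslit : 1 + z / c ∈ Complex.slitPlane := by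
      refine Complex.mem_slitPlane_iff.2 (Or.inl ?_)
      have habs : ‖z / c‖ < 1 := by
        rw [norm_div, div_lt_one (by linarith)]; linarith
      have h2 : |(z/c).re| < 1 := lt_of_le_of_lt (Complex.abs_re_le_norm _) habs
      have h3 := abs_lt.1 h2
      have h1 : (1 + z / c).re = 1 + (z / c).re := by simp
      rw [h1]; linarith
    exact DifferentiableAt.comp (g := Complex.log) (f := fun z => 1 + z / c) z (Complex.differentiableAt_log hslit) (by fun_prop)
  have key := Complex.circleIntegral_sub_center_inv_smul_of_differentiable_on_off_countable
    (f := f) (c := (0:ℂ)) (R := R) hR Set.countable_empty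
    (fun z hz => (hdiff z hz).continuousAt.continuousWithinAt)
    (fun z hz => hdiff z (ball_subset_closedBall hz.1))
  have hf0 : f 0 = 0 := by simp [hf]
  rw [hf0, smul_zero] at key
  have hcm : ∀ θ : ℝ, circleMap 0 R θ = R * Complex.exp (θ * Complex.I) := by
    intro θ; simp [circleMap]
  have hmem : ∀ θ : ℝ, (R:ℂ) * Complex.exp (θ * Complex.I) ∈ closedBall (0:ℂ) R := by
    intro θ
    simp [Complex.dist_eq, abs_of_pos hR, Complex.norm_exp_ofReal_mul_I]
  have key2 : (∫ θ in (0:ℝ)..(2*π), f (R * Complex.exp (θ * Complex.I))) = 0 := by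
    have h3 : ∀ θ : ℝ, deriv (circleMap 0 R) θ • ((circleMap 0 R θ - 0)⁻¹ • f (circleMap 0 R θ))
        = Complex.I * f (R * Complex.exp (θ * Complex.I)) := by
      intro θ
      have hR0 : (R:ℂ) ≠ 0 := by exact_mod_cast hR.ne'
      have hexp : Complex.exp (θ * Complex.I) ≠ 0 := Complex.exp_ne_zero _
      rw [deriv_circleMap]
      simp only [smul_eq_mul, sub_zero, hcm]
      field_simp
    rw [circleIntegral] at key
    simp_rw [h3] at key
    rw [intervalIntegral.integral_const_mul] at key
    simpa [Complex.I_ne_zero] using key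
  have hcont : Continuous fun θ : ℝ => f ((R:ℂ) * Complex.exp (θ * Complex.I)) :=
    continuous_iff_continuousAt.2 fun θ =>
      ContinuousAt.comp (x := θ) (g := f)
        (f := fun θ : ℝ => (R:ℂ) * Complex.exp ((θ:ℂ) * Complex.I))
        (hdiff _ (hmem θ)).continuousAt (by fun_prop)
  have hre : ∀ θ : ℝ, (f ((R:ℂ) * Complex.exp (θ * Complex.I))).re
      = Real.log (‖(R:ℂ) * Complex.exp (θ * Complex.I) + c‖)
        - Real.log (‖c‖) := by
    intro θ
    set z := (R:ℂ) * Complex.exp (θ * Complex.I) with hz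
    have hzR : ‖z‖ ≤ R := by
      rw [hz]; simp [abs_of_pos hR, Complex.norm_exp_ofReal_mul_I]
    have h1 : 1 + z / c = (z + c) / c := by field_simp; ring
    rw [hf]
    simp only []
    rw [h1, Complex.log_re, norm_div,
      Real.log_div (by simpa using (hne z hzR)) (by simpa using hc0)]
  have hintre : (∫ θ in (0:ℝ)..(2*π),
      (f ((R:ℂ) * Complex.exp (θ * Complex.I))).re) = 0 := by
    have := Complex.reCLM.intervalIntegral_comp_comm
      (hcont.intervalIntegrable (μ := volume) (0:ℝ) (2*π))
    rw [key2] at this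
    simpa using this
  have hsplit : ∀ θ : ℝ, Real.log (‖(R:ℂ) * Complex.exp (θ * Complex.I) + c‖)
      = (f ((R:ℂ) * Complex.exp (θ * Complex.I))).re + Real.log (‖c‖) := by
    intro θ; rw [hre]; ring
  rw [intervalIntegral.integral_congr (fun θ _ => hsplit θ)]
  rw [intervalIntegral.integral_add (by exact (Complex.continuous_re.comp hcont).intervalIntegrable _ _)
    intervalIntegrable_const]
  rw [hintre, intervalIntegral.integral_const]
  simp

lemma disk_log (c : ℂ) (hc : 1 < ‖c‖) :
    ∫ y in unitDisk, Real.log (‖y + c‖) = π * Real.log (‖c‖) := by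
  have hUD : unitDisk = Metric.closedBall (0:ℂ) 1 := by
    ext z; simp [unitDisk, Complex.dist_eq]
  have hmeas : MeasurableSet unitDisk := by
    rw [hUD]; exact measurableSet_closedBall
  set g : ℂ → ℝ := fun y => Real.log (‖y + c‖) with hg
  rw [← MeasureTheory.integral_indicator hmeas]
  rw [← Complex.integral_comp_polarCoord_symm (Set.indicator unitDisk g)]
  set F : ℝ × ℝ → ℝ := fun p =>
    p.1 * Real.log (‖p.1 * Complex.exp (p.2 * Complex.I) + c‖) with hF
  have hsymm : ∀ p : ℝ × ℝ, Complex.polarCoord.symm p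
      = (p.1 : ℂ) * Complex.exp (p.2 * Complex.I) := by
    intro p
    rw [Complex.polarCoord_symm_apply, Complex.exp_mul_I]
    push_cast
    ring
  have hind : ∀ p : ℝ × ℝ,
      p.1 • Set.indicator unitDisk g (Complex.polarCoord.symm p)
        = Set.indicator {q : ℝ × ℝ | |q.1| ≤ 1} F p := by
    intro p
    have habs : ‖Complex.polarCoord.symm p‖ = |p.1| :=
      Complex.norm_polarCoord_symm p
    by_cases h : |p.1| ≤ 1
    · rw [Set.indicator_of_mem (by simpa [unitDisk] using habs ▸ h : Complex.polarCoord.symm p ∈ unitDisk),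
        Set.indicator_of_mem (by exact h)]
      rw [hF, hg]
      simp [hsymm p, smul_eq_mul]
    · rw [Set.indicator_of_notMem (by simpa [unitDisk, habs] using h),
        Set.indicator_of_notMem (by exact h)]
      simp
  simp_rw [hind]
  rw [setIntegral_indicator ((isClosed_le (continuous_fst.abs) continuous_const).measurableSet)]
  have hset : polarCoord.target ∩ {q : ℝ × ℝ | |q.1| ≤ 1}
      = Set.Ioc (0:ℝ) 1 ×ˢ Set.Ioo (-π) π := by
    show (Set.Ioi (0:ℝ) ×ˢ Set.Ioo (-π) π) ∩ _ = _
    ext p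
    simp only [Set.mem_inter_iff, Set.mem_prod, Set.mem_Ioi, Set.mem_Ioo, Set.mem_setOf_eq,
      Set.mem_Ioc]
    constructor
    · rintro ⟨⟨h1, h2⟩, h3⟩
      exact ⟨⟨h1, (abs_le.1 h3).2⟩, h2⟩
    · rintro ⟨⟨h1, h2⟩, h3⟩
      exact ⟨⟨h1, h3⟩, abs_le.2 ⟨by linarith, h2⟩⟩
  rw [hset]
  -- Fubini
  have hInt : IntegrableOn F (Set.Ioc (0:ℝ) 1 ×ˢ Set.Ioo (-π) π) := by
    have hK : IsCompact (Set.Icc (0:ℝ) 1 ×ˢ Set.Icc (-π) π) :=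
      isCompact_Icc.prod isCompact_Icc
    have hC : ContinuousOn F (Set.Icc (0:ℝ) 1 ×ˢ Set.Icc (-π) π) := by
      apply ContinuousOn.mul (by fun_prop)
      apply ContinuousOn.log
        (continuous_norm.comp_continuousOn (by fun_prop))
      intro p hp
      have h1 : ‖(p.1 : ℂ) * Complex.exp (p.2 * Complex.I)‖ = |p.1| := by
        simp [Complex.norm_exp_ofReal_mul_I]
      have h2 : |p.1| ≤ 1 := abs_le.2 ⟨by linarith [hp.1.1], hp.1.2⟩
      intro h
      rw [Function.comp_apply, norm_eq_zero] at h
      have h3 : (p.1 : ℂ) * Complex.exp (p.2 * Complex.I) = -c := by linear_combination h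
      rw [h3] at h1
      simp at h1
      linarith
    exact (hC.integrableOn_compact hK).mono_set
      (Set.prod_mono Set.Ioc_subset_Icc_self Set.Ioo_subset_Icc_self)
  rw [MeasureTheory.Measure.volume_eq_prod] at hInt ⊢
  rw [setIntegral_prod F hInt]
  -- inner integral
  have hinner : ∀ r ∈ Set.Ioc (0:ℝ) 1,
      (∫ θ in Set.Ioo (-π) π, F (r, θ)) = r * (2 * π * Real.log (‖c‖)) := by
    intro r hr
    have hper : Function.Periodic
        (fun θ : ℝ => Real.log (‖(r:ℂ) * Complex.exp (θ * Complex.I) + c‖)) (2*π) := by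
      intro θ
      have : ((θ + 2*π : ℝ) : ℂ) * Complex.I = θ * Complex.I + 2*π*Complex.I := by
        push_cast; ring
      simp only [this, Complex.exp_add, Complex.exp_two_pi_mul_I, mul_one]
    have h1 : (∫ θ in Set.Ioo (-π) π,
        Real.log (‖(r:ℂ) * Complex.exp (θ * Complex.I) + c‖))
        = ∫ θ in (-π)..π, Real.log (‖(r:ℂ) * Complex.exp (θ * Complex.I) + c‖) := by
      rw [intervalIntegral.integral_of_le (by linarith [Real.pi_pos]), integral_Ioc_eq_integral_Ioo]
    have h2 := Function.Periodic.intervalIntegral_add_eq hper (-π) 0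
    rw [(by ring : -π + 2*π = π), zero_add] at h2
    have h3 := circle_log c r hr.1 (lt_of_le_of_lt hr.2 hc)
    simp only [hF]
    rw [MeasureTheory.integral_const_mul, h1, h2, h3]
  rw [setIntegral_congr_fun measurableSet_Ioc hinner]
  rw [MeasureTheory.integral_mul_const]
  have : (∫ r in Set.Ioc (0:ℝ) 1, r) = 1/2 := by
    rw [← intervalIntegral.integral_of_le zero_le_one]
    simp [integral_id]
  rw [this]
  ring

lemma circle_log_one (c : ℂ) (hc : 1 < ‖c‖) :
    ∫ θ in (0:ℝ)..(2*π), Real.log (‖Complex.exp (θ * Complex.I) + c‖)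
      = 2 * π * Real.log (‖c‖) := by
  have := circle_log c 1 one_pos hc
  simpa using this

lemma abs_k (k : ℝ) (hk : 2 ≤ k) : ‖(k : ℂ)‖ = k := by
  rw [Complex.norm_real, Real.norm_eq_abs, abs_of_pos (by linarith)]

lemma one_lt_abs_exp_add (k : ℝ) (hk : 2 ≤ k) (θ : ℝ) (hθ : Real.cos θ ≠ -1) :
    1 < ‖Complex.exp (θ * Complex.I) + (k : ℂ)‖ := by
  set z := Complex.exp (θ * Complex.I) + (k : ℂ) with hz
  have hre : z.re = Real.cos θ + k := by
    rw [hz, Complex.add_re, Complex.exp_ofReal_mul_I_re, Complex.ofReal_re]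
  have him : z.im = Real.sin θ := by
    rw [hz, Complex.add_im, Complex.exp_ofReal_mul_I_im, Complex.ofReal_im, add_zero]
  have hsq : (‖z‖) ^ 2 = (Real.cos θ + k) ^ 2 + (Real.sin θ) ^ 2 := by
    rw [Complex.sq_norm, Complex.normSq_apply, hre, him]; ring
  have hcos : -1 < Real.cos θ := lt_of_le_of_ne (Real.neg_one_le_cos θ) (Ne.symm hθ)
  have h1 : 1 < (‖z‖) ^ 2 := by
    rw [hsq]
    nlinarith [Real.sin_sq_add_cos_sq θ]
  nlinarith [norm_nonneg z]

lemma one_lt_abs_add (k : ℝ) (hk : 2 ≤ k) (x : ℂ) (hx : ‖x‖ ≤ 1) (hx1 : x ≠ -1) :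
    1 < ‖x + (k : ℂ)‖ := by
  have hsq : (‖x‖) ^ 2 = x.re ^ 2 + x.im ^ 2 := by
    rw [Complex.sq_norm, Complex.normSq_apply]; ring
  have h1 : x.re ^ 2 + x.im ^ 2 ≤ 1 := by
    rw [← hsq]; nlinarith [norm_nonneg x]
  have hre : -1 ≤ x.re := by nlinarith
  have hre' : -1 < x.re := by
    rcases lt_or_eq_of_le hre with h | h
    · exact h
    · exfalso
      apply hx1
      have him : x.im = 0 := by nlinarith
      apply Complex.ext <;> simp [← h, him]
  have hres : (‖x + (k:ℂ)‖) ^ 2 = (x.re + k) ^ 2 + x.im ^ 2 := by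
    rw [Complex.sq_norm, Complex.normSq_apply]
    simp
    ring
  have h2 : 1 < (‖x + (k:ℂ)‖) ^ 2 := by rw [hres]; nlinarith
  nlinarith [norm_nonneg (x + (k:ℂ))]

lemma mahler_eq (k : ℝ) (hk : 2 ≤ k) : mahlerXYK k = Real.log k := by
  have hnull : (volume : Measure ℝ) {θ : ℝ | Real.cos θ = -1} = 0 := by
    apply Set.Countable.measure_zero
    apply Set.Countable.mono _ (Set.countable_range (fun n : ℤ => π + n * (2*π)))
    intro x hx
    obtain ⟨n, hn⟩ := Real.cos_eq_neg_one_iff.1 hx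
    exact ⟨n, hn⟩
  have hae : ∀ᵐ θ : ℝ, Real.cos θ ≠ -1 := by
    rw [ae_iff]
    simpa using hnull
  have hinner : ∀ θ₁ : ℝ, Real.cos θ₁ ≠ -1 →
      (∫ θ₂ in (0:ℝ)..(2*π), Real.log (‖Complex.exp (θ₁ * Complex.I) +
        Complex.exp (θ₂ * Complex.I) + (k : ℂ)‖))
      = 2 * π * Real.log (‖Complex.exp (θ₁ * Complex.I) + (k:ℂ)‖) := by
    intro θ₁ hθ₁
    rw [← circle_log_one _ (one_lt_abs_exp_add k hk θ₁ hθ₁)]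
    apply intervalIntegral.integral_congr
    intro θ₂ _
    simp only []
    rw [show Complex.exp (θ₁ * Complex.I) + Complex.exp (θ₂ * Complex.I) + (k:ℂ)
        = Complex.exp (θ₂ * Complex.I) + (Complex.exp (θ₁ * Complex.I) + (k:ℂ)) from by ring]
  have houter : (∫ θ₁ in (0:ℝ)..(2*π), ∫ θ₂ in (0:ℝ)..(2*π),
      Real.log (‖Complex.exp (θ₁ * Complex.I) +
        Complex.exp (θ₂ * Complex.I) + (k : ℂ)‖))
      = ∫ θ₁ in (0:ℝ)..(2*π),
          2 * π * Real.log (‖Complex.exp (θ₁ * Complex.I) + (k:ℂ)‖) := by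
    apply intervalIntegral.integral_congr_ae
    filter_upwards [hae] with θ₁ hθ₁ _
    exact hinner θ₁ hθ₁
  have hsecond : (∫ θ₁ in (0:ℝ)..(2*π),
      2 * π * Real.log (‖Complex.exp (θ₁ * Complex.I) + (k:ℂ)‖))
      = 2 * π * (2 * π * Real.log k) := by
    rw [intervalIntegral.integral_const_mul]
    rw [circle_log_one (k:ℂ) (by rw [abs_k k hk]; linarith), abs_k k hk]
  rw [mahlerXYK, houter, hsecond]
  have hπ : π ≠ 0 := Real.pi_ne_zero
  field_simp

lemma areal_eq (k : ℝ) (hk : 2 ≤ k) : arealMahlerXYK k = Real.log k := by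
  have hUD : MeasurableSet unitDisk := by
    have : unitDisk = Metric.closedBall (0:ℂ) 1 := by
      ext z; simp [unitDisk, Complex.dist_eq]
    rw [this]; exact measurableSet_closedBall
  have hae : ∀ᵐ x : ℂ, x ≠ -1 := by
    rw [ae_iff]
    simpa using measure_singleton (-1 : ℂ)
  have hinner : ∀ x : ℂ, x ∈ unitDisk → x ≠ -1 →
      (∫ y in unitDisk, Real.log (‖x + y + (k:ℂ)‖))
        = π * Real.log (‖x + (k:ℂ)‖) := by
    intro x hx hx1
    rw [← disk_log (x + (k:ℂ)) (one_lt_abs_add k hk x hx hx1)]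
    apply MeasureTheory.integral_congr_ae
    filter_upwards with y
    rw [show x + y + (k:ℂ) = y + (x + (k:ℂ)) from by ring]
  have houter : (∫ x in unitDisk, ∫ y in unitDisk, Real.log (‖x + y + (k:ℂ)‖))
      = ∫ x in unitDisk, π * Real.log (‖x + (k:ℂ)‖) := by
    apply setIntegral_congr_ae hUD
    filter_upwards [hae] with x hx1 hx
    exact hinner x hx hx1
  have hsecond : (∫ x in unitDisk, π * Real.log (‖x + (k:ℂ)‖))
      = π * (π * Real.log k) := by
    rw [MeasureTheory.integral_const_mul, disk_log (k:ℂ) (by rw [abs_k k hk]; linarith),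
      abs_k k hk]
  rw [arealMahlerXYK, houter, hsecond]
  have hπ : π ≠ 0 := Real.pi_ne_zero
  field_simp

end Aux

theorem arealMahler_xyk_eq_log (k : ℝ) (hk : 2 ≤ k) :
    arealMahlerXYK k = mahlerXYK k ∧ mahlerXYK k = Real.log k :=
  ⟨(areal_eq k hk).trans (mahler_eq k hk).symm, mahler_eq k hk⟩
end

section
/- For every real number k ≥ 4, m_D((x+1)(y+1)+kz) = 9/(8k²) − 1/2 + log(k). -/
open MeasureTheory Real

/-- Compatibility: the complex absolute value as an `AbsoluteValue`, equal to the norm. -/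
noncomputable def Complex.abs : AbsoluteValue ℂ ℝ where
  toFun := fun z => ‖z‖
  map_mul' := norm_mul
  nonneg' := norm_nonneg
  eq_zero' := fun _ => norm_eq_zero
  add_le' := norm_add_le

theorem Complex.abs_apply' (z : ℂ) : Complex.abs z = ‖z‖ := rfl

theorem Complex.norm_eq_abs (z : ℂ) : ‖z‖ = Complex.abs z := rfl

theorem Complex.abs_ofReal (r : ℝ) : Complex.abs (r : ℂ) = |r| := by
  simp [Complex.abs_apply']

theorem Complex.abs_exp (z : ℂ) : Complex.abs (Complex.exp z) = Real.exp z.re :=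
  Complex.norm_exp z

theorem Complex.abs_conj (z : ℂ) : Complex.abs ((starRingEnd ℂ) z) = Complex.abs z :=
  Complex.norm_conj z

theorem Complex.continuous_abs : Continuous Complex.abs := continuous_norm

theorem Complex.polarCoord_symm_abs (p : ℝ × ℝ) :
    Complex.abs (Complex.polarCoord.symm p) = |p.1| := Complex.norm_polarCoord_symm p

theorem abs_circleMap_zero (R θ : ℝ) : Complex.abs (circleMap 0 R θ) = |R| :=
  norm_circleMap_zero R θ

theorem Complex.sq_abs (z : ℂ) : Complex.abs z ^ 2 = Complex.normSq z := Complex.sq_norm z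

theorem Complex.abs_re_le_abs (z : ℂ) : |z.re| ≤ Complex.abs z := Complex.abs_re_le_norm z

section AuxMahler
open Set intervalIntegral

lemma myIntegrableOn_log_Ioc01 : IntegrableOn Real.log (Set.Ioc (0:ℝ) 1) volume := by
  have hd : IntegrableOn (fun x : ℝ => 2 * x ^ (-(1:ℝ)/2)) (Set.Ioc (0:ℝ) 1) volume := by
    have h := (intervalIntegral.intervalIntegrable_rpow' (r := -(1:ℝ)/2) (by norm_num)
      (a := (0:ℝ)) (b := 1))
    rw [intervalIntegrable_iff_integrableOn_Ioc_of_le zero_le_one] at h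
    exact h.const_mul 2
  refine hd.integrable.mono' ?_ ?_
  · exact (Real.measurable_log.aestronglyMeasurable)
  · rw [ae_restrict_iff' measurableSet_Ioc]
    filter_upwards with x hx
    have hx0 : 0 < x := hx.1
    have hlog : Real.log x ≤ 0 := Real.log_nonpos hx0.le hx.2
    rw [Real.norm_eq_abs, abs_of_nonpos hlog]
    have h1 : -Real.log x = 2 * Real.log (x ^ (-(1:ℝ)/2)) := by
      rw [Real.log_rpow hx0]; ring
    have h2 : Real.log (x ^ (-(1:ℝ)/2)) ≤ x ^ (-(1:ℝ)/2) := by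
      have h3 := Real.log_le_sub_one_of_pos (Real.rpow_pos_of_pos hx0 (-(1:ℝ)/2))
      linarith
    rw [h1]; nlinarith [Real.rpow_pos_of_pos hx0 (-(1:ℝ)/2)]

lemma myIntervalIntegrable_log (c : ℝ) (h0 : 0 ≤ c) (h1 : c ≤ 1) :
    IntervalIntegrable Real.log volume 0 c := by
  rw [intervalIntegrable_iff_integrableOn_Ioc_of_le h0]
  exact myIntegrableOn_log_Ioc01.mono_set (Set.Ioc_subset_Ioc le_rfl h1)

lemma myIntegrableOn_log_abs_sub (s : ℝ) (h0 : 0 ≤ s) (h1 : s ≤ 1) :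
    IntegrableOn (fun r => Real.log |r - s|) (Set.Ioc (0:ℝ) 1) volume := by
  have hu : Set.Ioc (0:ℝ) s ∪ Set.Ioc s 1 = Set.Ioc (0:ℝ) 1 := Set.Ioc_union_Ioc_eq_Ioc h0 h1
  rw [← hu]
  apply IntegrableOn.union
  · have hbase : IntervalIntegrable (fun x => Real.log (s - x)) volume 0 s := by
      have := (myIntervalIntegrable_log s h0 h1).comp_sub_left s
      simpa using this.symm
    rw [intervalIntegrable_iff_integrableOn_Ioc_of_le h0] at hbase
    apply hbase.congr_fun ?_ measurableSet_Ioc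
    intro r hr
    simp only []
    rw [abs_sub_comm, abs_of_nonneg (by linarith [hr.2] : (0:ℝ) ≤ s - r)]
  · have hbase : IntervalIntegrable (fun x => Real.log (x - s)) volume s 1 := by
      have := (myIntervalIntegrable_log (1 - s) (by linarith) (by linarith)).comp_sub_right s
      simpa using this
    rcases le_or_gt s 1 with hs1 | hs1
    · rw [intervalIntegrable_iff_integrableOn_Ioc_of_le h1] at hbase
      apply hbase.congr_fun ?_ measurableSet_Ioc
      intro r hr
      simp only []
      rw [abs_of_nonneg (by linarith [hr.1] : (0:ℝ) ≤ r - s)]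
    · exact absurd h1 (not_le.mpr hs1)

lemma myMeanValue (w : ℂ) (hw : Complex.abs w < 1) :
    ∫ θ in (0:ℝ)..(2*π), Real.log (Complex.abs (1 + w * Complex.exp (θ * Complex.I))) = 0 := by
  set f : ℂ → ℂ := fun z => Complex.log (1 + w * z) with hf
  have hmem : ∀ z ∈ Metric.closedBall (0:ℂ) 1, 1 + w * z ∈ Complex.slitPlane := by
    intro z hz
    rw [Metric.mem_closedBall, dist_zero_right] at hz
    left
    have habs : Complex.abs (w * z) < 1 := by
      rw [map_mul]
      calc Complex.abs w * Complex.abs z ≤ Complex.abs w * 1 :=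
            mul_le_mul_of_nonneg_left hz (Complex.abs.nonneg w)
        _ < 1 := by simpa using hw
    have hre : -(1:ℝ) < (w * z).re := by
      have := neg_abs_le (w * z).re
      have := Complex.abs_re_le_abs (w * z)
      nlinarith [abs_nonneg (w*z).re]
    simp only [Complex.add_re, Complex.one_re]
    linarith
  have hd : DifferentiableOn ℂ f (Metric.closedBall 0 1) := by
    intro z hz
    apply DifferentiableAt.differentiableWithinAt
    exact DifferentiableAt.comp z (Complex.differentiableAt_log (hmem z hz)) (by fun_prop)
  have hcauchy := hd.circleIntegral_sub_inv_smul (w := 0) (by simp)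
  have hf0 : f 0 = 0 := by simp [hf]
  rw [hf0, smul_zero] at hcauchy
  -- unfold circle integral
  have hint : ∀ θ : ℝ, deriv (circleMap 0 1) θ • (circleMap 0 1 θ - 0)⁻¹ • f (circleMap 0 1 θ)
      = Complex.I * f (circleMap 0 1 θ) := by
    intro θ
    have hne : circleMap 0 1 θ ≠ 0 := circleMap_ne_center one_ne_zero
    rw [deriv_circleMap]
    simp only [smul_eq_mul, sub_zero]
    field_simp
  rw [circleIntegral] at hcauchy
  simp only [hint] at hcauchy
  rw [intervalIntegral.integral_const_mul] at hcauchy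
  have hzero : ∫ θ in (0:ℝ)..(2*π), f (circleMap 0 1 θ) = 0 := by
    rcases mul_eq_zero.mp hcauchy with h | h
    · exact absurd h Complex.I_ne_zero
    · exact h
  -- take real parts
  have hcont : Continuous fun θ : ℝ => f (circleMap 0 1 θ) := by
    rw [continuous_iff_continuousAt]
    intro θ
    have hg : ContinuousAt (fun θ : ℝ => 1 + w * circleMap 0 1 θ) θ :=
      (continuous_const.add (continuous_const.mul (continuous_circleMap 0 1))).continuousAt
    exact ContinuousAt.comp (x := θ) (g := Complex.log)
      (_root_.continuousAt_clog (hmem (circleMap 0 1 θ)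
        (by rw [Metric.mem_closedBall, dist_zero_right, Complex.norm_eq_abs, abs_circleMap_zero]; norm_num))) hg
  have hre := ContinuousLinearMap.intervalIntegral_comp_comm Complex.reCLM
      (hcont.intervalIntegrable (μ := volume) 0 (2*π))
  rw [hzero] at hre
  simp only [Complex.reCLM_apply, Complex.zero_re] at hre
  have : ∀ θ : ℝ, (f (circleMap 0 1 θ)).re
      = Real.log (Complex.abs (1 + w * Complex.exp (θ * Complex.I))) := by
    intro θ
    simp [hf, Complex.log_re, circleMap, Complex.abs_apply']
  have hcg := intervalIntegral.integral_congr (a := (0:ℝ)) (b := 2*π) (μ := volume)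
    (f := fun θ : ℝ => Real.log (Complex.abs (1 + w * Complex.exp (θ * Complex.I))))
    (g := fun θ : ℝ => (f (circleMap 0 1 θ)).re) (fun θ _ => (this θ).symm)
  rw [hcg]
  exact hre

lemma myCircleLog (r : ℝ) (hr : 0 < r) (a : ℂ) (hne : r ≠ Complex.abs a) :
    ∫ θ in Set.Ioo (-π) π, Real.log (Complex.abs (r * Complex.exp (θ * Complex.I) + a))
      = 2 * π * Real.log (max r (Complex.abs a)) := by
  obtain ⟨m, w, hm, hmax, hw, hfac⟩ :
      ∃ (m : ℝ) (w : ℂ), 0 < m ∧ m = max r (Complex.abs a) ∧ Complex.abs w < 1 ∧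
        ∀ θ : ℝ, Complex.abs (r * Complex.exp (θ * Complex.I) + a)
          = m * Complex.abs (1 + w * Complex.exp (θ * Complex.I)) := by
    rcases lt_or_gt_of_ne hne with hlt | hgt
    · -- r < |a|
      have ha : a ≠ 0 := by
        intro h; rw [h] at hlt; simp at hlt; linarith
      refine ⟨Complex.abs a, (r : ℂ) / a, Complex.abs.pos ha, (max_eq_right hlt.le).symm, ?_, ?_⟩
      · rw [map_div₀, Complex.abs_ofReal, abs_of_pos hr, div_lt_one (Complex.abs.pos ha)]
        exact hlt
      · intro θ
        have h1 : (r : ℂ) * Complex.exp (θ * Complex.I) + a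
            = a * (1 + ((r:ℂ)/a) * Complex.exp (θ * Complex.I)) := by
          field_simp; ring
        rw [h1, map_mul]
    · -- r > |a|
      have hrne : (r : ℂ) ≠ 0 := by exact_mod_cast hr.ne'
      refine ⟨r, (starRingEnd ℂ) a / r, hr, (max_eq_left hgt.le).symm, ?_, ?_⟩
      · rw [map_div₀, Complex.abs_conj, Complex.abs_ofReal, abs_of_pos hr,
          div_lt_one hr]
        exact hgt
      · intro θ
        have hunit : Complex.abs (Complex.exp (-(θ * Complex.I))) = 1 := by
          rw [Complex.abs_exp]; simp
        have h2 : Complex.exp (-(↑θ * Complex.I)) * (↑r * Complex.exp (↑θ * Complex.I) + a)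
            = (r : ℂ) + a * Complex.exp (-(↑θ * Complex.I)) := by
          rw [mul_add]
          have : Complex.exp (-(↑θ * Complex.I)) * (↑r * Complex.exp (↑θ * Complex.I))
              = (r:ℂ) * (Complex.exp (-(↑θ * Complex.I) + ↑θ * Complex.I)) := by
            rw [Complex.exp_add]; ring
          rw [this]; simp; ring
        have h3 : (r : ℂ) + (starRingEnd ℂ) a * Complex.exp (↑θ * Complex.I)
            = (r : ℂ) * (1 + ((starRingEnd ℂ) a / r) * Complex.exp (↑θ * Complex.I)) := by
          field_simp
        calc Complex.abs (↑r * Complex.exp (↑θ * Complex.I) + a)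
            = Complex.abs (Complex.exp (-(↑θ * Complex.I))
                * (↑r * Complex.exp (↑θ * Complex.I) + a)) := by
              rw [map_mul, hunit, one_mul]
          _ = Complex.abs ((r : ℂ) + a * Complex.exp (-(↑θ * Complex.I))) := by rw [h2]
          _ = Complex.abs ((starRingEnd ℂ) ((r : ℂ) + a * Complex.exp (-(↑θ * Complex.I)))) :=
              (Complex.abs_conj _).symm
          _ = Complex.abs ((r : ℂ) + (starRingEnd ℂ) a * Complex.exp (↑θ * Complex.I)) := by
              rw [map_add, map_mul, ← Complex.exp_conj]
              simp [Complex.conj_ofReal]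
          _ = r * Complex.abs (1 + ((starRingEnd ℂ) a / r) * Complex.exp (↑θ * Complex.I)) := by
              rw [h3, map_mul, Complex.abs_ofReal, abs_of_pos hr]
  have hpos : ∀ θ : ℝ, 0 < Complex.abs (1 + w * Complex.exp (θ * Complex.I)) := by
    intro θ
    have habs : Complex.abs (w * Complex.exp (θ * Complex.I)) < 1 := by
      rw [map_mul, Complex.abs_exp]; simp [hw]
    have htri := Complex.abs.add_le (1 + w * Complex.exp (θ * Complex.I))
      (-(w * Complex.exp (θ * Complex.I)))
    simp only [add_neg_cancel_right, map_one, map_neg_eq_map] at htri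
    linarith
  have hcongr : ∀ θ ∈ Set.Ioo (-π) π,
      Real.log (Complex.abs (r * Complex.exp (θ * Complex.I) + a))
        = Real.log m + Real.log (Complex.abs (1 + w * Complex.exp (θ * Complex.I))) := by
    intro θ _
    rw [hfac θ, Real.log_mul hm.ne' (hpos θ).ne']
  rw [setIntegral_congr_fun measurableSet_Ioo hcongr]
  have hcont : Continuous fun θ : ℝ => Real.log (Complex.abs (1 + w * Complex.exp (θ * Complex.I))) := by
    rw [continuous_iff_continuousAt]
    intro θ
    have hg : Continuous (fun θ : ℝ => Complex.abs (1 + w * Complex.exp (θ * Complex.I))) :=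
      Complex.continuous_abs.comp (continuous_const.add (continuous_const.mul
        (Complex.continuous_exp.comp (Complex.continuous_ofReal.mul continuous_const))))
    exact ContinuousAt.comp (x := θ) (Real.continuousAt_log (hpos θ).ne') hg.continuousAt
  have hIg : IntegrableOn (fun θ : ℝ => Real.log (Complex.abs (1 + w * Complex.exp (θ * Complex.I))))
      (Set.Ioo (-π) π) volume :=
    (hcont.integrableOn_Icc).mono_set Set.Ioo_subset_Icc_self
  rw [MeasureTheory.integral_add (show IntegrableOn (fun _ : ℝ => Real.log m) (Set.Ioo (-π) π) volume from
    integrableOn_const (by simp [Real.volume_Ioo])) hIg]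
  have hzero : ∫ θ in Set.Ioo (-π) π,
      Real.log (Complex.abs (1 + w * Complex.exp (θ * Complex.I))) = 0 := by
    have hle : -π ≤ π := by linarith [Real.pi_pos]
    have h1 : ∫ θ in Set.Ioo (-π) π,
        Real.log (Complex.abs (1 + w * Complex.exp (θ * Complex.I)))
        = ∫ θ in (-π)..π, Real.log (Complex.abs (1 + w * Complex.exp (θ * Complex.I))) := by
      rw [intervalIntegral.integral_of_le hle, MeasureTheory.integral_Ioc_eq_integral_Ioo]
    have hper : Function.Periodic
        (fun θ : ℝ => Real.log (Complex.abs (1 + w * Complex.exp (θ * Complex.I)))) (2*π) := by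
      intro θ
      have : Complex.exp (↑(θ + 2*π) * Complex.I) = Complex.exp (↑θ * Complex.I) := by
        push_cast
        rw [add_mul, Complex.exp_add, Complex.exp_two_pi_mul_I, mul_one]
      simp only [this]
    have h2 := hper.intervalIntegral_add_eq (-π) 0
    rw [h1]
    have h3 : -π + 2*π = π := by ring
    rw [h3] at h2
    rw [h2, zero_add]
    exact myMeanValue w hw
  rw [hzero, add_zero, setIntegral_const]
  rw [measureReal_def, Real.volume_Ioo, hmax]
  rw [ENNReal.toReal_ofReal (by linarith [Real.pi_pos])]
  rw [smul_eq_mul]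
  ring

lemma myRadialIntegrable (s : ℝ) (h0 : 0 ≤ s) (h1 : s ≤ 1) :
    IntervalIntegrable (fun r => r * (2 * π * Real.log (max r s))) volume 0 1 := by
  have hf1 : IntervalIntegrable (fun r => r * (2 * π * Real.log (max r s))) volume 0 s := by
    apply ContinuousOn.intervalIntegrable
    apply ContinuousOn.congr (f := fun r : ℝ => r * (2 * π * Real.log s))
      (by fun_prop : Continuous fun r : ℝ => r * (2 * π * Real.log s)).continuousOn
    intro r hr
    rw [Set.uIcc_of_le h0, Set.mem_Icc] at hr
    simp only []
    rw [max_eq_right hr.2]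
  have hf2 : IntervalIntegrable (fun r => r * (2 * π * Real.log (max r s))) volume s 1 := by
    apply ContinuousOn.intervalIntegrable
    apply ContinuousOn.congr (f := fun r : ℝ => 2 * π * (r * Real.log r))
      ((continuous_const.mul Real.continuous_mul_log).continuousOn)
    intro r hr
    rw [Set.uIcc_of_le h1, Set.mem_Icc] at hr
    simp only []
    rw [max_eq_left hr.1]
    ring
  exact hf1.trans hf2

lemma myRadial (s : ℝ) (h0 : 0 ≤ s) (h1 : s ≤ 1) :
    ∫ r in (0:ℝ)..1, r * (2 * π * Real.log (max r s)) = π * (s^2 - 1) / 2 := by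
  have hf1 : IntervalIntegrable (fun r => r * (2 * π * Real.log (max r s))) volume 0 s :=
    (myRadialIntegrable s h0 h1).mono_set (by rw [Set.uIcc_of_le h0, Set.uIcc_of_le (by linarith : (0:ℝ) ≤ 1)]; exact Set.Icc_subset_Icc le_rfl h1)
  have hf2 : IntervalIntegrable (fun r => r * (2 * π * Real.log (max r s))) volume s 1 :=
    (myRadialIntegrable s h0 h1).mono_set (by rw [Set.uIcc_of_le h1, Set.uIcc_of_le (by linarith : (0:ℝ) ≤ 1)]; exact Set.Icc_subset_Icc h0 le_rfl)
  rw [← intervalIntegral.integral_add_adjacent_intervals hf1 hf2]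
  have e1 : ∫ r in (0:ℝ)..s, r * (2 * π * Real.log (max r s)) = π * s^2 * Real.log s := by
    rw [intervalIntegral.integral_congr (g := fun r => (2 * π * Real.log s) * r)
      (fun r hr => by
        rw [Set.uIcc_of_le h0, Set.mem_Icc] at hr
        simp only []
        rw [max_eq_right hr.2]; ring)]
    rw [intervalIntegral.integral_const_mul, integral_id]
    ring
  have e2 : ∫ r in s..(1:ℝ), r * (2 * π * Real.log (max r s))
      = 2 * π * (-1/4 - s^2/2 * Real.log s + s^2/4) := by
    rw [intervalIntegral.integral_congr (g := fun r => 2 * π * (r * Real.log r))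
      (fun r hr => by
        rw [Set.uIcc_of_le h1, Set.mem_Icc] at hr
        simp only []
        rw [max_eq_left hr.1]; ring)]
    rw [intervalIntegral.integral_const_mul]
    have hcontF : ContinuousOn (fun x : ℝ => x^2/2 * Real.log x - x^2/4) (Set.Icc s 1) := by
      apply ContinuousOn.sub
      · have hc : Continuous fun x : ℝ => x/2 * (x * Real.log x) :=
          (continuous_id.div_const 2).mul Real.continuous_mul_log
        apply Continuous.continuousOn
        convert hc using 1
        funext x; ring
      · fun_prop
    have hderivF : ∀ x ∈ Set.Ioo s 1, HasDerivWithinAt (fun x : ℝ => x^2/2 * Real.log x - x^2/4)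
        (x * Real.log x) (Set.Ioi x) x := by
      intro x hx
      have hx0 : 0 < x := lt_of_le_of_lt h0 hx.1
      have d1 : HasDerivAt (fun x : ℝ => x^2/2 * Real.log x)
          (x * Real.log x + x^2/2 * x⁻¹) x := by
        have p1 : HasDerivAt (fun x : ℝ => x^2/2) x x := by
          have := (hasDerivAt_pow 2 x).div_const 2
          exact this.congr_deriv (by rw [show (2:ℕ) - 1 = 1 from rfl, pow_one]; push_cast; ring)
        exact p1.mul (Real.hasDerivAt_log hx0.ne')
      have d2 : HasDerivAt (fun x : ℝ => x^2/4) (x/2) x := by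
        have := (hasDerivAt_pow 2 x).div_const 4
        exact this.congr_deriv (by rw [show (2:ℕ) - 1 = 1 from rfl, pow_one]; push_cast; ring)
      have hd := d1.sub d2
      have heq : x * Real.log x + x^2/2 * x⁻¹ - x/2 = x * Real.log x := by
        field_simp; ring
      rw [heq] at hd
      exact hd.hasDerivWithinAt
    have key := intervalIntegral.integral_eq_sub_of_hasDeriv_right_of_le (a := s) (b := 1)
      (f := fun x : ℝ => x^2/2 * Real.log x - x^2/4) (f' := fun x => x * Real.log x) h1
      hcontF hderivF (Real.continuous_mul_log.intervalIntegrable s 1)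
    have hF : ∫ r in s..(1:ℝ), r * Real.log r = -1/4 - s^2/2 * Real.log s + s^2/4 := by
      rw [key]; simp; ring
    rw [hF]
  rw [e1, e2]
  ring

lemma unitDisk_measurable : MeasurableSet unitDisk := by
  have : unitDisk = Metric.closedBall (0:ℂ) 1 := by
    ext z
    simp [unitDisk, Metric.mem_closedBall, dist_zero_right, Complex.norm_eq_abs]
  rw [this]
  exact measurableSet_closedBall

noncomputable instance : IsFiniteMeasure (volume.restrict (Set.Ioo (-π) π)) :=
  ⟨by rw [Measure.restrict_apply_univ]; simp [Real.volume_Ioo]⟩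

lemma ae_fst_mem {s : Set ℝ} (hs : MeasurableSet s) (t : Set ℝ) :
    ∀ᵐ p : ℝ × ℝ ∂((volume.restrict s).prod (volume.restrict t)), p.1 ∈ s := by
  rw [ae_iff]
  have h1 : {p : ℝ × ℝ | ¬ p.1 ∈ s} = sᶜ ×ˢ (Set.univ : Set ℝ) := by
    ext p; simp
  rw [h1, Measure.prod_prod, Measure.restrict_apply hs.compl]
  simp

lemma ae_fst_ne (c : ℝ) (s t : Set ℝ) :
    ∀ᵐ p : ℝ × ℝ ∂((volume.restrict s).prod (volume.restrict t)), p.1 ≠ c := by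
  rw [ae_iff]
  have h1 : {p : ℝ × ℝ | ¬ p.1 ≠ c} = {c} ×ˢ (Set.univ : Set ℝ) := by
    ext ⟨x, y⟩; simp [eq_comm]
  rw [h1, Measure.prod_prod, Measure.restrict_apply (measurableSet_singleton c)]
  have : volume ({c} ∩ s) = 0 :=
    le_antisymm (le_trans (measure_mono Set.inter_subset_left) (by simp)) (by simp)
  rw [this, zero_mul]

lemma polar_meas (f : ℂ → ℝ) (hf : Measurable f) (μ : Measure (ℝ × ℝ)) :
    AEStronglyMeasurable
      (fun p : ℝ × ℝ => p.1 • (Set.indicator unitDisk f) (Complex.polarCoord.symm p)) μ := by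
  apply Measurable.aestronglyMeasurable
  apply Measurable.mul measurable_fst
  have hind : Measurable (Set.indicator unitDisk f) := hf.indicator unitDisk_measurable
  have hsymm : Measurable (fun p : ℝ × ℝ => Complex.polarCoord.symm p) := by
    have : (fun p : ℝ × ℝ => Complex.polarCoord.symm p)
        = fun p : ℝ × ℝ => (p.1 : ℂ) * (Real.cos p.2 + Real.sin p.2 * Complex.I) := by
      funext p; rw [Complex.polarCoord_symm_apply]
    rw [this]
    fun_prop
  exact hind.comp hsymm

lemma disk_integral_eq_polar (f : ℂ → ℝ)
    (hInt : Integrable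
      (fun p : ℝ × ℝ => p.1 • (Set.indicator unitDisk f) (Complex.polarCoord.symm p))
      ((volume.restrict (Set.Ioi 0)).prod (volume.restrict (Set.Ioo (-π) π)))) :
    ∫ z in unitDisk, f z
      = ∫ r in Set.Ioi (0:ℝ), ∫ θ in Set.Ioo (-π) π,
          r • (Set.indicator unitDisk f) (Complex.polarCoord.symm (r, θ)) := by
  rw [← MeasureTheory.integral_indicator unitDisk_measurable]
  rw [← Complex.integral_comp_polarCoord_symm (Set.indicator unitDisk f)]
  have htarget : polarCoord.target = Set.Ioi (0:ℝ) ×ˢ Set.Ioo (-π) π := rfl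
  rw [htarget]
  rw [Measure.prod_restrict] at hInt
  rw [Measure.volume_eq_prod]
  exact MeasureTheory.setIntegral_prod _ hInt

lemma myDiskLog (k : ℝ) (hk : 0 < k) (w : ℂ) (hw : Complex.abs w ≤ k) :
    ∫ z in unitDisk, Real.log (Complex.abs (w + k * z))
      = π * Real.log k + π * ((Complex.abs w)^2 / k^2 - 1) / 2 := by
  set g : ℂ → ℝ := fun z => Real.log (Complex.abs (w + k * z)) with hg
  have hgmeas : Measurable g := by
    apply Real.measurable_log.comp
    exact Complex.continuous_abs.measurable.comp (by fun_prop)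
  set s' : ℝ := Complex.abs w / k with hs'
  have h0' : 0 ≤ s' := by positivity
  have h1' : s' ≤ 1 := by rw [hs', div_le_one hk]; exact hw
  have hks' : k * s' = Complex.abs w := by rw [hs']; field_simp
  set c0 : ℝ := |Real.log (2*k)| + |Real.log k| with hc0
  -- the integrability of the polar-side function
  have hInt : Integrable
      (fun p : ℝ × ℝ => p.1 • (Set.indicator unitDisk g) (Complex.polarCoord.symm p))
      ((volume.restrict (Set.Ioi 0)).prod (volume.restrict (Set.Ioo (-π) π))) := by
    have hbase : IntegrableOn (fun r => c0 + |Real.log (|r - s'|)|) (Set.Ioc (0:ℝ) 1) volume := by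
      apply Integrable.add
      · exact integrableOn_const (by simp [Real.volume_Ioc])
      · exact (myIntegrableOn_log_abs_sub s' h0' h1').abs
    have hg1 : Integrable (Set.indicator (Set.Ioc (0:ℝ) 1) (fun r => c0 + |Real.log (|r - s'|)|))
        (volume.restrict (Set.Ioi 0)) := by
      rw [integrable_indicator_iff measurableSet_Ioc]
      unfold IntegrableOn
      rw [Measure.restrict_restrict measurableSet_Ioc]
      rw [Set.inter_eq_self_of_subset_left (fun x hx => hx.1)]
      exact hbase
    have hH : Integrable
        (fun p : ℝ × ℝ => Set.indicator (Set.Ioc (0:ℝ) 1) (fun r => c0 + |Real.log (|r - s'|)|) p.1)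
        ((volume.restrict (Set.Ioi 0)).prod (volume.restrict (Set.Ioo (-π) π))) := by
      have := hg1.mul_prod (integrable_const (1:ℝ) (μ := volume.restrict (Set.Ioo (-π) π)))
      simpa using this
    apply hH.mono' (polar_meas g hgmeas _)
    filter_upwards [ae_fst_mem measurableSet_Ioi (Set.Ioo (-π) π), ae_fst_ne s' _ _]
      with p hp1 hpne
    have hr0 : 0 < p.1 := hp1
    have habs : Complex.abs (Complex.polarCoord.symm p) = p.1 := by
      rw [Complex.polarCoord_symm_abs, abs_of_pos hr0]
    by_cases hr1 : p.1 ≤ 1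
    · have hmem : Complex.polarCoord.symm p ∈ unitDisk := by
        simp only [unitDisk, Set.mem_setOf_eq, Complex.norm_eq_abs, habs]; exact hr1
      rw [Set.indicator_of_mem hmem, Set.indicator_of_mem (Set.mem_Ioc.mpr ⟨hr0, hr1⟩)]
      set t : ℝ := Complex.abs (w + k * Complex.polarCoord.symm p) with ht
      have htlow : k * |p.1 - s'| ≤ t := by
        have e1 : Complex.abs ((k:ℂ) * Complex.polarCoord.symm p) = k * p.1 := by
          rw [map_mul, Complex.abs_ofReal, abs_of_pos hk, habs]
        have e2 := Complex.abs.abs_abv_sub_le_abv_sub ((k:ℂ) * Complex.polarCoord.symm p) (-w)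
        rw [map_neg_eq_map, sub_neg_eq_add, e1] at e2
        have e3 : k * |p.1 - s'| = |k * p.1 - Complex.abs w| := by
          rw [← hks', show k * p.1 - k * s' = k * (p.1 - s') by ring, abs_mul, abs_of_pos hk]
        rw [e3]
        calc |k * p.1 - Complex.abs w| ≤ Complex.abs ((k:ℂ) * Complex.polarCoord.symm p + w) := e2
          _ = t := by rw [ht, add_comm]
      have htup : t ≤ 2 * k := by
        calc t ≤ Complex.abs w + Complex.abs ((k:ℂ) * Complex.polarCoord.symm p) :=
              Complex.abs.add_le _ _
          _ = Complex.abs w + k * p.1 := by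
              rw [map_mul, Complex.abs_ofReal, abs_of_pos hk, habs]
          _ ≤ k + k * 1 := by
              apply add_le_add hw
              exact mul_le_mul_of_nonneg_left hr1 hk.le
          _ = 2 * k := by ring
      have hLpos : 0 < |p.1 - s'| := abs_pos.mpr (sub_ne_zero.mpr hpne)
      have htpos : 0 < t := lt_of_lt_of_le (by positivity) htlow
      have hlogt : |Real.log t| ≤ c0 + |Real.log (|p.1 - s'|)| := by
        rcases le_or_gt t 1 with hle | hgt
        · rw [abs_of_nonpos (Real.log_nonpos htpos.le hle)]
          have hmono : Real.log (k * |p.1 - s'|) ≤ Real.log t :=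
            Real.log_le_log (by positivity) htlow
          rw [Real.log_mul hk.ne' hLpos.ne'] at hmono
          have hk' : -Real.log k ≤ |Real.log k| := neg_le_abs _
          have hL' : -Real.log |p.1 - s'| ≤ |Real.log (|p.1 - s'|)| := neg_le_abs _
          have : -Real.log t ≤ -Real.log k - Real.log |p.1 - s'| := by linarith
          have h2k : (0:ℝ) ≤ |Real.log (2*k)| := abs_nonneg _
          rw [hc0]; linarith
        · rw [abs_of_pos (Real.log_pos hgt)]
          have : Real.log t ≤ Real.log (2*k) := Real.log_le_log htpos htup
          have h2 : Real.log (2*k) ≤ |Real.log (2*k)| := le_abs_self _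
          have h3 : (0:ℝ) ≤ |Real.log k| := abs_nonneg _
          have h4 : (0:ℝ) ≤ |Real.log (|p.1 - s'|)| := abs_nonneg _
          rw [hc0]; linarith
      rw [norm_smul, Real.norm_eq_abs, Real.norm_eq_abs, abs_of_pos hr0]
      calc p.1 * |g (Complex.polarCoord.symm p)| ≤ 1 * |g (Complex.polarCoord.symm p)| :=
            mul_le_mul_of_nonneg_right hr1 (abs_nonneg _)
        _ = |Real.log t| := by rw [one_mul]
        _ ≤ c0 + |Real.log (|p.1 - s'|)| := hlogt
    · have hnmem : Complex.polarCoord.symm p ∉ unitDisk := by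
        simp only [unitDisk, Set.mem_setOf_eq, Complex.norm_eq_abs, habs]; exact hr1
      rw [Set.indicator_of_notMem hnmem, Set.indicator_of_notMem
        (fun hmem => hr1 hmem.2)]
      simp
  rw [disk_integral_eq_polar g hInt]
  -- evaluate inner integral a.e.
  have houter : (fun r : ℝ => ∫ θ in Set.Ioo (-π) π,
        r • (Set.indicator unitDisk g) (Complex.polarCoord.symm (r, θ)))
      =ᵐ[volume.restrict (Set.Ioi 0)]
      (Set.indicator (Set.Ioc (0:ℝ) 1)
        (fun r => r * (2 * π * (Real.log k + Real.log (max r s'))))) := by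
    have hne : ∀ᵐ r : ℝ ∂volume.restrict (Set.Ioi 0), r ≠ s' := by
      apply ae_restrict_of_ae
      rw [ae_iff]
      have : {r : ℝ | ¬ r ≠ s'} = {s'} := by ext r; simp
      rw [this]; exact volume_singleton
    filter_upwards [ae_restrict_mem measurableSet_Ioi, hne] with r hr0 hrne
    have hr0' : (0:ℝ) < r := hr0
    by_cases hr1 : r ≤ 1
    · have hmem : ∀ θ : ℝ, Complex.polarCoord.symm (r, θ) ∈ unitDisk := by
        intro θ
        simp only [unitDisk, Set.mem_setOf_eq, Complex.norm_eq_abs, Complex.polarCoord_symm_abs]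
        rw [abs_of_pos hr0']; exact hr1
      have hinner : ∀ θ : ℝ, (Set.indicator unitDisk g) (Complex.polarCoord.symm (r, θ))
          = Real.log (Complex.abs ((k*r : ℝ) * Complex.exp (θ * Complex.I) + w)) := by
        intro θ
        rw [Set.indicator_of_mem (hmem θ)]
        have harg : w + (k:ℂ) * Complex.polarCoord.symm (r, θ)
            = ((k*r : ℝ) : ℂ) * Complex.exp (θ * Complex.I) + w := by
          rw [Complex.polarCoord_symm_apply, Complex.exp_mul_I]
          push_cast
          ring
        rw [hg]
        simp only []
        rw [harg]
      have hkr : k * r ≠ Complex.abs w := by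
        intro h
        apply hrne
        rw [hs', ← h]
        field_simp
      calc (∫ θ in Set.Ioo (-π) π, r • (Set.indicator unitDisk g) (Complex.polarCoord.symm (r, θ)))
          = r • ∫ θ in Set.Ioo (-π) π,
              Real.log (Complex.abs ((k*r : ℝ) * Complex.exp (θ * Complex.I) + w)) := by
            rw [← MeasureTheory.integral_smul]
            apply setIntegral_congr_fun measurableSet_Ioo
            intro θ _
            simp only [hinner θ]
        _ = r * (2 * π * Real.log (max (k*r) (Complex.abs w))) := by
            rw [myCircleLog (k*r) (by positivity) w hkr, smul_eq_mul]
        _ = Set.indicator (Set.Ioc (0:ℝ) 1)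
              (fun r => r * (2 * π * (Real.log k + Real.log (max r s')))) r := by
            rw [Set.indicator_of_mem (Set.mem_Ioc.mpr ⟨hr0', hr1⟩)]
            have hmax : max (k*r) (Complex.abs w) = k * max r s' := by
              rw [← hks', mul_max_of_nonneg _ _ hk.le]
            rw [hmax, Real.log_mul hk.ne' (by positivity : (0:ℝ) < max r s').ne']
    · have hnmem : ∀ θ : ℝ, Complex.polarCoord.symm (r, θ) ∉ unitDisk := by
        intro θ
        simp only [unitDisk, Set.mem_setOf_eq, Complex.norm_eq_abs, Complex.polarCoord_symm_abs]
        rw [abs_of_pos hr0']; exact hr1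
      have : ∀ θ : ℝ, r • (Set.indicator unitDisk g) (Complex.polarCoord.symm (r, θ)) = 0 := by
        intro θ; rw [Set.indicator_of_notMem (hnmem θ), smul_zero]
      rw [Set.indicator_of_notMem (fun hmem => hr1 hmem.2)]
      simp only [this]
      exact integral_zero _ _
  rw [integral_congr_ae houter]
  rw [MeasureTheory.setIntegral_indicator measurableSet_Ioc]
  rw [Set.inter_eq_self_of_subset_right (fun x hx => hx.1)]
  rw [← intervalIntegral.integral_of_le zero_le_one]
  have hsplit : ∀ r : ℝ, r * (2 * π * (Real.log k + Real.log (max r s')))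
      = (2 * π * Real.log k) * r + r * (2 * π * Real.log (max r s')) := by
    intro r; ring
  rw [intervalIntegral.integral_congr (g := fun r =>
    (2 * π * Real.log k) * r + r * (2 * π * Real.log (max r s'))) (fun r _ => hsplit r)]
  rw [intervalIntegral.integral_add
    (((by fun_prop : Continuous fun r : ℝ => (2 * π * Real.log k) * r)).intervalIntegrable 0 1)
    (myRadialIntegrable s' h0' h1')]
  rw [intervalIntegral.integral_const_mul, integral_id, myRadial s' h0' h1']
  have hs2 : s'^2 = (Complex.abs w)^2 / k^2 := by
    rw [hs', div_pow]
  rw [hs2]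
  ring

lemma myDiskPoly (c d : ℝ) :
    ∫ y in unitDisk, (c + d * (Complex.abs (y + 1))^2) = π * c + d * (3 * π / 2) := by
  set f : ℂ → ℝ := fun y => c + d * (Complex.abs (y + 1))^2 with hf
  have hfmeas : Measurable f := by
    apply Measurable.const_add
    apply Measurable.const_mul
    exact (Complex.continuous_abs.comp (continuous_id.add continuous_const)).measurable.pow_const 2
  have hbound : ∀ z ∈ unitDisk, |f z| ≤ |c| + |d| * 4 := by
    intro z hz
    have h1 : Complex.abs (z + 1) ≤ 2 := by
      calc Complex.abs (z + 1) ≤ Complex.abs z + Complex.abs 1 := Complex.abs.add_le _ _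
        _ ≤ 1 + 1 := by
            apply add_le_add hz
            simp
        _ = 2 := by norm_num
    have h2 : (Complex.abs (z + 1))^2 ≤ 4 := by nlinarith [Complex.abs.nonneg (z+1)]
    calc |f z| ≤ |c| + |d * (Complex.abs (z + 1))^2| := abs_add_le _ _
      _ = |c| + |d| * (Complex.abs (z + 1))^2 := by
          rw [abs_mul, abs_of_nonneg (by positivity : (0:ℝ) ≤ (Complex.abs (z+1))^2)]
      _ ≤ |c| + |d| * 4 := by
          apply add_le_add le_rfl
          exact mul_le_mul_of_nonneg_left h2 (abs_nonneg d)
  have hInt : Integrable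
      (fun p : ℝ × ℝ => p.1 • (Set.indicator unitDisk f) (Complex.polarCoord.symm p))
      ((volume.restrict (Set.Ioi 0)).prod (volume.restrict (Set.Ioo (-π) π))) := by
    have hg1 : Integrable (Set.indicator (Set.Ioc (0:ℝ) 1) (fun _ => |c| + |d| * 4))
        (volume.restrict (Set.Ioi 0)) := by
      rw [integrable_indicator_iff measurableSet_Ioc]
      unfold IntegrableOn
      rw [Measure.restrict_restrict measurableSet_Ioc]
      rw [Set.inter_eq_self_of_subset_left (fun x hx => hx.1)]
      exact integrableOn_const (by simp [Real.volume_Ioc])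
    have hH : Integrable
        (fun p : ℝ × ℝ => Set.indicator (Set.Ioc (0:ℝ) 1) (fun _ => |c| + |d| * 4) p.1)
        ((volume.restrict (Set.Ioi 0)).prod (volume.restrict (Set.Ioo (-π) π))) := by
      have := hg1.mul_prod (integrable_const (1:ℝ) (μ := volume.restrict (Set.Ioo (-π) π)))
      simpa using this
    apply hH.mono' (polar_meas f hfmeas _)
    filter_upwards [ae_fst_mem measurableSet_Ioi (Set.Ioo (-π) π)] with p hp1
    have hr0 : 0 < p.1 := hp1
    have habs : Complex.abs (Complex.polarCoord.symm p) = p.1 := by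
      rw [Complex.polarCoord_symm_abs, abs_of_pos hr0]
    by_cases hr1 : p.1 ≤ 1
    · have hmem : Complex.polarCoord.symm p ∈ unitDisk := by
        simp only [unitDisk, Set.mem_setOf_eq, Complex.norm_eq_abs, habs]; exact hr1
      rw [Set.indicator_of_mem hmem, Set.indicator_of_mem (Set.mem_Ioc.mpr ⟨hr0, hr1⟩)]
      rw [norm_smul, Real.norm_eq_abs, Real.norm_eq_abs, abs_of_pos hr0]
      calc p.1 * |f (Complex.polarCoord.symm p)| ≤ 1 * |f (Complex.polarCoord.symm p)| :=
            mul_le_mul_of_nonneg_right hr1 (abs_nonneg _)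
        _ = |f (Complex.polarCoord.symm p)| := one_mul _
        _ ≤ |c| + |d| * 4 := hbound _ hmem
    · have hnmem : Complex.polarCoord.symm p ∉ unitDisk := by
        simp only [unitDisk, Set.mem_setOf_eq, Complex.norm_eq_abs, habs]; exact hr1
      rw [Set.indicator_of_notMem hnmem, Set.indicator_of_notMem (fun hmem => hr1 hmem.2)]
      simp [abs_nonneg]
  rw [disk_integral_eq_polar f hInt]
  have houter : (fun r : ℝ => ∫ θ in Set.Ioo (-π) π,
        r • (Set.indicator unitDisk f) (Complex.polarCoord.symm (r, θ)))
      =ᵐ[volume.restrict (Set.Ioi 0)]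
      (Set.indicator (Set.Ioc (0:ℝ) 1) (fun r => 2 * π * (r * (c + d * (r^2 + 1))))) := by
    filter_upwards [ae_restrict_mem measurableSet_Ioi] with r hr0
    have hr0' : (0:ℝ) < r := hr0
    by_cases hr1 : r ≤ 1
    · have hmem : ∀ θ : ℝ, Complex.polarCoord.symm (r, θ) ∈ unitDisk := by
        intro θ
        simp only [unitDisk, Set.mem_setOf_eq, Complex.norm_eq_abs, Complex.polarCoord_symm_abs]
        rw [abs_of_pos hr0']; exact hr1
      have hinner : ∀ θ : ℝ, r • (Set.indicator unitDisk f) (Complex.polarCoord.symm (r, θ))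
          = (r * (c + d * (r^2 + 1))) + (2 * d * r^2) * Real.cos θ := by
        intro θ
        rw [Set.indicator_of_mem (hmem θ)]
        have hval : f (Complex.polarCoord.symm (r, θ)) = c + d * (r^2 + 2*r*Real.cos θ + 1) := by
          rw [hf]
          simp only []
          congr 1
          have habs2 : (Complex.abs (Complex.polarCoord.symm (r, θ) + 1))^2
              = r^2 + 2*r*Real.cos θ + 1 := by
            rw [Complex.sq_abs, Complex.normSq_apply, Complex.polarCoord_symm_apply]
            simp only [Complex.add_re, Complex.add_im, Complex.mul_re, Complex.mul_im,
              Complex.ofReal_re, Complex.ofReal_im, Complex.add_re, Complex.one_re,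
              Complex.one_im, Complex.I_re, Complex.I_im]
            ring_nf
            nlinarith [Real.sin_sq_add_cos_sq θ]
          rw [habs2]
        rw [hval, smul_eq_mul]
        ring
      rw [Set.indicator_of_mem (Set.mem_Ioc.mpr ⟨hr0', hr1⟩)]
      have hsplit : (∫ θ in Set.Ioo (-π) π,
          r • (Set.indicator unitDisk f) (Complex.polarCoord.symm (r, θ)))
          = ∫ θ in Set.Ioo (-π) π,
            ((r * (c + d * (r^2 + 1))) + (2 * d * r^2) * Real.cos θ) := by
        apply setIntegral_congr_fun measurableSet_Ioo
        intro θ _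
        simp only [hinner θ]
      rw [hsplit]
      rw [MeasureTheory.integral_add (show IntegrableOn (fun _ : ℝ => r * (c + d * (r^2 + 1)))
          (Set.Ioo (-π) π) volume from integrableOn_const (by simp [Real.volume_Ioo]))
        (show IntegrableOn (fun θ : ℝ => (2 * d * r^2) * Real.cos θ) (Set.Ioo (-π) π) volume from
          ((continuous_const.mul Real.continuous_cos).integrableOn_Icc).mono_set
          Set.Ioo_subset_Icc_self)]
      have hcos : ∫ θ in Set.Ioo (-π) π, (2 * d * r^2) * Real.cos θ = 0 := by
        have h1 : ∫ θ in Set.Ioo (-π) π, (2 * d * r^2) * Real.cos θ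
            = ∫ θ in (-π)..π, (2 * d * r^2) * Real.cos θ := by
          rw [intervalIntegral.integral_of_le (by linarith [Real.pi_pos] : -π ≤ π),
            MeasureTheory.integral_Ioc_eq_integral_Ioo]
        rw [h1, intervalIntegral.integral_const_mul, integral_cos]
        simp
      rw [hcos, add_zero, setIntegral_const]
      rw [measureReal_def, Real.volume_Ioo, ENNReal.toReal_ofReal (by linarith [Real.pi_pos])]
      rw [smul_eq_mul]
      ring
    · have hnmem : ∀ θ : ℝ, Complex.polarCoord.symm (r, θ) ∉ unitDisk := by
        intro θ
        simp only [unitDisk, Set.mem_setOf_eq, Complex.norm_eq_abs, Complex.polarCoord_symm_abs]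
        rw [abs_of_pos hr0']; exact hr1
      have hzero : ∀ θ : ℝ, r • (Set.indicator unitDisk f) (Complex.polarCoord.symm (r, θ)) = 0 := by
        intro θ; rw [Set.indicator_of_notMem (hnmem θ), smul_zero]
      rw [Set.indicator_of_notMem (fun hmem => hr1 hmem.2)]
      simp only [hzero]
      exact integral_zero _ _
  rw [integral_congr_ae houter]
  rw [MeasureTheory.setIntegral_indicator measurableSet_Ioc]
  rw [Set.inter_eq_self_of_subset_right (fun x hx => hx.1)]
  rw [← intervalIntegral.integral_of_le zero_le_one]
  have hsplit2 : ∀ r : ℝ, 2 * π * (r * (c + d * (r^2 + 1)))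
      = (2 * π * c + 2 * π * d) * r + (2 * π * d) * r^3 := by
    intro r; ring
  rw [intervalIntegral.integral_congr (g := fun r =>
    (2 * π * c + 2 * π * d) * r + (2 * π * d) * r^3) (fun r _ => hsplit2 r)]
  rw [intervalIntegral.integral_add
    ((by fun_prop : Continuous fun r : ℝ => (2 * π * c + 2 * π * d) * r).intervalIntegrable 0 1)
    ((by fun_prop : Continuous fun r : ℝ => (2 * π * d) * r^3).intervalIntegrable 0 1)]
  rw [intervalIntegral.integral_const_mul, intervalIntegral.integral_const_mul,
    integral_id, integral_pow]
  norm_num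
  ring

end AuxMahler

/-- The areal (logarithmic) Mahler measure of `(x+1)(y+1) + kz`. -/
noncomputable def arealMahlerQk (k : ℝ) : ℝ :=
  (1 / π ^ 3) *
    ∫ x in unitDisk, ∫ y in unitDisk, ∫ z in unitDisk,
      Real.log ‖(x + 1) * (y + 1) + (k : ℂ) * z‖

theorem arealMahler_Qk_of_four_le (k : ℝ) (hk : 4 ≤ k) :
    arealMahlerQk k = 9 / (8 * k ^ 2) - 1 / 2 + Real.log k := by
  have hk0 : (0:ℝ) < k := by linarith
  have habs2 : ∀ x ∈ unitDisk, Complex.abs (x + 1) ≤ 2 := by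
    intro x hx
    calc Complex.abs (x + 1) ≤ Complex.abs x + Complex.abs 1 := Complex.abs.add_le _ _
      _ ≤ 1 + 1 := add_le_add hx (by simp)
      _ = 2 := by norm_num
  have hinner : ∀ x ∈ unitDisk, ∀ y ∈ unitDisk,
      (∫ z in unitDisk, Real.log (Complex.abs ((x + 1) * (y + 1) + (k : ℂ) * z)))
        = (π * Real.log k - π/2) + (π * (Complex.abs (x + 1))^2 / (2 * k^2))
            * (Complex.abs (y + 1))^2 := by
    intro x hx y hy
    have hw : Complex.abs ((x + 1) * (y + 1)) ≤ k := by
      rw [map_mul]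
      calc Complex.abs (x + 1) * Complex.abs (y + 1) ≤ 2 * 2 :=
          mul_le_mul (habs2 x hx) (habs2 y hy) (Complex.abs.nonneg _) (by norm_num)
        _ ≤ k := by linarith
    rw [myDiskLog k hk0 ((x + 1) * (y + 1)) hw]
    rw [map_mul, mul_pow]
    field_simp
    ring
  have hmid : ∀ x ∈ unitDisk,
      (∫ y in unitDisk, ∫ z in unitDisk,
          Real.log (Complex.abs ((x + 1) * (y + 1) + (k : ℂ) * z)))
        = (π^2 * Real.log k - π^2/2) + (3 * π^2 / (4 * k^2)) * (Complex.abs (x + 1))^2 := by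
    intro x hx
    rw [setIntegral_congr_fun unitDisk_measurable (fun y hy => hinner x hx y hy)]
    rw [myDiskPoly (π * Real.log k - π/2) (π * (Complex.abs (x + 1))^2 / (2 * k^2))]
    field_simp
    ring
  unfold arealMahlerQk
  simp only [Complex.norm_eq_abs]
  rw [setIntegral_congr_fun unitDisk_measurable (fun x hx => hmid x hx)]
  rw [myDiskPoly (π^2 * Real.log k - π^2/2) (3 * π^2 / (4 * k^2))]
  have hpi : π ≠ 0 := Real.pi_ne_zero
  field_simp
  ring
end

section
/- For every complex number τ with Im(τ) > 0, the family indexed by pairs of odd integers (m, n) with terms e^{−πim/2} / ( (mτ + n)² · m ) is absolutely summable; that is, Σ_{m,n odd} | e^{−πim/2} / ((mτ + n)² m) | < ∞. -/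
open Real

private lemma aux_max_bound {a b : ℝ} (ha : 1 ≤ a) (hb : 1 ≤ b) :
    a ^ ((3:ℝ)/2) * b ^ ((3:ℝ)/2) ≤ (max a b) ^ 2 * a := by
  set M := max a b with hM
  have ha0 : (0:ℝ) ≤ a := by linarith
  have hb0 : (0:ℝ) ≤ b := by linarith
  have hMa : a ≤ M := le_max_left a b
  have hMb : b ≤ M := le_max_right a b
  have hab : a ^ ((3:ℝ)/2) * b ^ ((3:ℝ)/2) = Real.sqrt ((a*b)^3) := by
    rw [← Real.mul_rpow ha0 hb0, Real.sqrt_eq_rpow, ← Real.rpow_natCast (a*b) 3,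
      ← Real.rpow_mul (by positivity)]
    norm_num
  have key : (a*b)^3 ≤ (M^2*a)^2 := by
    have h1 : a * b^3 ≤ M * M^3 :=
      mul_le_mul hMa (pow_le_pow_left₀ hb0 hMb 3) (by positivity) (by linarith)
    nlinarith [sq_nonneg a, sq_nonneg b, mul_pos (lt_of_lt_of_le one_pos ha) (lt_of_lt_of_le one_pos hb)]
  calc a ^ ((3:ℝ)/2) * b ^ ((3:ℝ)/2) = Real.sqrt ((a*b)^3) := hab
    _ ≤ Real.sqrt ((M^2*a)^2) := Real.sqrt_le_sqrt key
    _ = M^2*a := Real.sqrt_sq (by positivity)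

theorem summable_odd_lattice_sum (τ : ℂ) (hτ : 0 < τ.im) :
    Summable (fun p : {q : ℤ × ℤ // Odd q.1 ∧ Odd q.2} =>
      ‖Complex.exp (-(π * Complex.I * (p.1.1 : ℂ)) / 2) /
        (((p.1.1 : ℂ) * τ + (p.1.2 : ℂ)) ^ 2 * (p.1.1 : ℂ))‖) := by
  set z : UpperHalfPlane := ⟨τ, hτ⟩ with hzdef
  have hr : 0 < EisensteinSeries.r z := EisensteinSeries.r_pos z
  have hsum : Summable (fun p : {q : ℤ × ℤ // Odd q.1 ∧ Odd q.2} =>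
      (EisensteinSeries.r z ^ 2)⁻¹ *
        (|(p.1.1:ℝ)| ^ (-(3/2) : ℝ) * |(p.1.2:ℝ)| ^ (-(3/2) : ℝ))) := by
    apply Summable.mul_left
    have h1 : Summable (fun n : ℤ => |(n:ℝ)| ^ (-(3/2) : ℝ)) :=
      summable_abs_int_rpow (by norm_num)
    have h2 : Summable (fun q : ℤ × ℤ => |(q.1:ℝ)| ^ (-(3/2) : ℝ) * |(q.2:ℝ)| ^ (-(3/2) : ℝ)) :=
      h1.mul_of_nonneg h1 (fun _ => Real.rpow_nonneg (abs_nonneg _) _)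
        (fun _ => Real.rpow_nonneg (abs_nonneg _) _)
    exact h2.comp_injective Subtype.val_injective
  apply Summable.of_nonneg_of_le (fun p => norm_nonneg _) _ hsum
  rintro ⟨⟨m, n⟩, hm, hn⟩
  simp only
  have hmne : m ≠ 0 := by rintro rfl; exact (Int.not_odd_iff_even.mpr Even.zero) hm
  have hnne : n ≠ 0 := by rintro rfl; exact (Int.not_odd_iff_even.mpr Even.zero) hn
  have hm1 : (1:ℝ) ≤ |(m:ℝ)| := by exact_mod_cast Int.one_le_abs hmne
  have hn1 : (1:ℝ) ≤ |(n:ℝ)| := by exact_mod_cast Int.one_le_abs hnne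
  -- abs of the exponential is 1
  have he : ‖Complex.exp (-(π * Complex.I * (m:ℂ)) / 2)‖ = 1 := by
    have h : -((π:ℂ) * Complex.I * (m:ℂ)) / 2 = ((-(π * m)/2 : ℝ) : ℂ) * Complex.I := by
      push_cast; ring
    rw [h, Complex.norm_exp]
    simp
  -- lower bound on |mτ+n|
  have hx : (![m, n] : Fin 2 → ℤ) ≠ 0 := by
    intro h
    exact hmne (by simpa using congrFun h 0)
  have hkey := EisensteinSeries.r_mul_max_le z hx
  simp only [Matrix.cons_val_zero, Matrix.cons_val_one, Matrix.head_cons] at hkey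
  have hnorm : ‖(![m, n] : Fin 2 → ℤ)‖ = max |(m:ℝ)| |(n:ℝ)| := by
    rw [EisensteinSeries.norm_eq_max_natAbs]
    simp only [Matrix.cons_val_zero, Matrix.cons_val_one, Matrix.head_cons]
    push_cast [Nat.cast_natAbs]
    simp
  rw [hnorm] at hkey
  have hzτ : (z : ℂ) = τ := rfl
  rw [hzτ] at hkey
  set M := max |(m:ℝ)| |(n:ℝ)| with hMdef
  set A := ‖(m:ℂ) * τ + (n:ℂ)‖ with hA
  have hM1 : (1:ℝ) ≤ M := le_trans hm1 (le_max_left _ _)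
  have hA0 : 0 < A := lt_of_lt_of_le (by positivity) hkey
  -- compute LHS
  rw [norm_div, he, norm_mul, norm_pow]
  have habs_m : ‖((m:ℂ))‖ = |(m:ℝ)| := by
    rw [← Complex.ofReal_intCast, Complex.norm_real, Real.norm_eq_abs]
  rw [habs_m, ← hA]
  -- main inequality
  have hden : EisensteinSeries.r z ^ 2 * (|(m:ℝ)| ^ ((3:ℝ)/2) * |(n:ℝ)| ^ ((3:ℝ)/2))
      ≤ A ^ 2 * |(m:ℝ)| := by
    calc EisensteinSeries.r z ^ 2 * (|(m:ℝ)| ^ ((3:ℝ)/2) * |(n:ℝ)| ^ ((3:ℝ)/2))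
        ≤ EisensteinSeries.r z ^ 2 * (M ^ 2 * |(m:ℝ)|) :=
          mul_le_mul_of_nonneg_left (aux_max_bound hm1 hn1) (by positivity)
      _ = (EisensteinSeries.r z * M) ^ 2 * |(m:ℝ)| := by ring
      _ ≤ A ^ 2 * |(m:ℝ)| := by gcongr
  have hrhs : (EisensteinSeries.r z ^ 2)⁻¹ * (|(m:ℝ)| ^ (-(3/2) : ℝ) * |(n:ℝ)| ^ (-(3/2) : ℝ))
      = 1 / (EisensteinSeries.r z ^ 2 * (|(m:ℝ)| ^ ((3:ℝ)/2) * |(n:ℝ)| ^ ((3:ℝ)/2))) := by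
    rw [Real.rpow_neg (abs_nonneg _), Real.rpow_neg (abs_nonneg _)]
    field_simp
  rw [hrhs]
  rw [div_le_div_iff₀ (by positivity) (by positivity)]
  simpa using hden
end
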